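/- For every real T ≥ 0, the number of pairs (i, j) ∈ ℤ × ℤ with i ≥ 0 and i² + 3j² ≤ T² is at least π·T²/(2·√3) − T − 1. -/

import Mathlib

open Real MeasureTheory Finset

private lemma cont_aux (c : ℝ) : Continuous (fun x : ℝ => Real.sqrt (c - x^2)) :=
  Real.continuous_sqrt.comp (continuous_const.sub (continuous_pow 2))

private lemma integral_quarter (T : ℝ) (hT : 0 ≤ T) :
    ∫ x in (0:ℝ)..T, Real.sqrt (T^2 - x^2) = Real.pi * T^2 / 4 := by
  have hhalf : ∫ x in (0:ℝ)..1, Real.sqrt (1 - x^2) = Real.pi / 4 := by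
    have h1 : ∫ x in (-1:ℝ)..1, Real.sqrt (1 - x^2) = Real.pi / 2 :=
      integral_sqrt_one_sub_sq
    have h2 : (∫ x in (0:ℝ)..1, Real.sqrt (1 - (-x)^2)) = ∫ x in (-1:ℝ)..(0:ℝ), Real.sqrt (1 - x^2) := by
      rw [intervalIntegral.integral_comp_neg (fun x => Real.sqrt (1 - x^2))]
      norm_num
    have h2' : (∫ x in (0:ℝ)..1, Real.sqrt (1 - x^2)) = ∫ x in (-1:ℝ)..(0:ℝ), Real.sqrt (1 - x^2) := by
      rw [← h2]
      congr 1
      ext x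
      norm_num
    have h3 := intervalIntegral.integral_add_adjacent_intervals
      (μ := volume) (a := (-1:ℝ)) (b := 0) (c := 1) (f := fun x => Real.sqrt (1 - x^2))
      ((cont_aux 1).intervalIntegrable (-1) 0) ((cont_aux 1).intervalIntegrable 0 1)
    rw [h1] at h3
    rw [← h2'] at h3
    linarith
  rcases eq_or_lt_of_le hT with h | h
  · simp [← h]
  · have hT0 : T ≠ 0 := ne_of_gt h
    have key : ∀ x : ℝ, Real.sqrt (T^2 - x^2) = T * Real.sqrt (1 - (x/T)^2) := by
      intro x
      rw [← Real.sqrt_sq hT, ← Real.sqrt_mul (sq_nonneg T)]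
      congr 1
      field_simp
      rw [Real.sq_sqrt (sq_nonneg T)]
    simp only [key]
    rw [intervalIntegral.integral_const_mul]
    rw [intervalIntegral.integral_comp_div (fun u => Real.sqrt (1 - u^2)) hT0]
    simp only [zero_div, div_self hT0, smul_eq_mul]
    rw [hhalf]
    ring

private lemma sum_sqrt_ge (T : ℝ) (hT : 0 ≤ T) :
    Real.pi * T^2 / 4 ≤ ∑ i ∈ Finset.range (⌊T⌋₊ + 1), Real.sqrt (T^2 - (i:ℝ)^2) := by
  set n := ⌊T⌋₊ + 1 with hn
  have hTn : T ≤ (n : ℝ) := by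
    have := Nat.lt_floor_add_one T
    push_cast [hn]
    linarith
  have hanti : AntitoneOn (fun x : ℝ => Real.sqrt (T^2 - x^2)) (Set.Icc (0:ℝ) (0 + n)) := by
    intro x hx y hy hxy
    apply Real.sqrt_le_sqrt
    have : x^2 ≤ y^2 := pow_le_pow_left₀ hx.1 hxy 2
    linarith
  have h1 := hanti.integral_le_sum
  simp only [zero_add] at h1
  have h2 : (∫ x in (0:ℝ)..T, Real.sqrt (T^2 - x^2)) ≤ ∫ x in (0:ℝ)..(n:ℝ), Real.sqrt (T^2 - x^2) := by
    apply intervalIntegral.integral_mono_interval (le_refl (0:ℝ)) hT hTn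
    · filter_upwards with x using Real.sqrt_nonneg _
    · exact (cont_aux (T^2)).intervalIntegrable 0 n
  rw [integral_quarter T hT] at h2
  exact le_trans h2 h1


/-- Lattice-point counting bound: for `T ≥ 0`, the number of pairs `(i, j) ∈ ℤ × ℤ`
with `i ≥ 0` and `i² + 3j² ≤ T²` is at least `π·T²/(2√3) − T − 1`. -/
theorem lattice_count_lower_bound (T : ℝ) (hT : 0 ≤ T) :
    Real.pi * T ^ 2 / (2 * Real.sqrt 3) - T - 1 ≤
      (({q : ℤ × ℤ | 0 ≤ q.1 ∧ (q.1 : ℝ) ^ 2 + 3 * (q.2 : ℝ) ^ 2 ≤ T ^ 2}.ncard : ℝ)) := by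
  classical
  set N := ⌊T⌋₊ with hNdef
  have hNT : (N : ℝ) ≤ T := Nat.floor_le hT
  set m : ℕ → ℕ := fun i => ⌊Real.sqrt ((T^2 - (i:ℝ)^2)/3)⌋₊ with hm
  set F : Finset (ℤ × ℤ) := (Finset.Icc ((0:ℤ), (-(N:ℤ))) ((N:ℤ), (N:ℤ))).filter
      (fun q => 0 ≤ q.1 ∧ (q.1 : ℝ)^2 + 3*(q.2:ℝ)^2 ≤ T^2) with hF
  -- the set is the finset
  have hSF : {q : ℤ × ℤ | 0 ≤ q.1 ∧ (q.1 : ℝ) ^ 2 + 3 * (q.2 : ℝ) ^ 2 ≤ T ^ 2} = ↑F := by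
    ext ⟨i, j⟩
    simp only [hF, Finset.coe_filter, Set.mem_setOf_eq, Finset.mem_Icc, Prod.mk_le_mk]
    constructor
    · rintro ⟨h1, h2⟩
      have hi2 : (i:ℝ)^2 ≤ T^2 := by nlinarith [sq_nonneg (j:ℝ)]
      have hj2 : (j:ℝ)^2 ≤ T^2 := by nlinarith [sq_nonneg (i:ℝ), sq_nonneg (j:ℝ)]
      have hiT : |(i:ℝ)| ≤ T := by
        have := Real.sqrt_le_sqrt hi2
        rwa [Real.sqrt_sq_eq_abs, Real.sqrt_sq hT] at this
      have hjT : |(j:ℝ)| ≤ T := by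
        have := Real.sqrt_le_sqrt hj2
        rwa [Real.sqrt_sq_eq_abs, Real.sqrt_sq hT] at this
      have key : ∀ k : ℤ, |(k:ℝ)| ≤ T → k ≤ (N:ℤ) := by
        intro k hk
        have : (k:ℝ) ≤ T := (abs_le.mp hk).2
        have h4 : k ≤ ⌊T⌋ := Int.le_floor.mpr this
        have h5 : ⌊T⌋ = (N:ℤ) := by
          rw [hNdef, ← Int.floor_toNat, Int.toNat_of_nonneg (Int.floor_nonneg.mpr hT)]
        omega
      have hiN : i ≤ (N:ℤ) := key i hiT
      have hjN : j ≤ (N:ℤ) := key j hjT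
      have hjN' : -(N:ℤ) ≤ j := by
        have := key (-j) (by rwa [Int.cast_neg, abs_neg])
        omega
      exact ⟨⟨⟨h1, hjN'⟩, hiN, hjN⟩, h1, h2⟩
    · rintro ⟨-, h⟩; exact h
  -- the lower-bound finset
  set G : Finset (ℤ × ℤ) := (Finset.range (N+1)).biUnion
      (fun i => {((i:ℤ))} ×ˢ Finset.Icc (-(m i : ℤ)) (m i)) with hG
  have hmem : ∀ i : ℕ, ∀ q : ℤ × ℤ, q ∈ ({((i:ℤ))} ×ˢ Finset.Icc (-(m i : ℤ)) (m i)) ↔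
      q.1 = (i:ℤ) ∧ -(m i : ℤ) ≤ q.2 ∧ q.2 ≤ (m i : ℤ) := by
    intro i q
    rw [Finset.mem_product, Finset.mem_singleton, Finset.mem_Icc]
  have hGF : G ⊆ F := by
    intro q hq
    rw [hG, Finset.mem_biUnion] at hq
    obtain ⟨i, hi, hqi⟩ := hq
    rw [hmem] at hqi
    obtain ⟨hq1, hq2, hq3⟩ := hqi
    have hiN : i ≤ N := Nat.lt_succ_iff.mp (Finset.mem_range.mp hi)
    have hiT : (i:ℝ) ≤ T := le_trans (by exact_mod_cast Nat.cast_le.mpr hiN) hNT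
    have hnn : (0:ℝ) ≤ (T^2 - (i:ℝ)^2)/3 := by
      have : (i:ℝ)^2 ≤ T^2 := by nlinarith [Nat.cast_nonneg (α := ℝ) i]
      linarith
    have hmi : ((m i : ℝ))^2 ≤ (T^2 - (i:ℝ)^2)/3 := by
      have h1 : (m i : ℝ) ≤ Real.sqrt ((T^2 - (i:ℝ)^2)/3) := Nat.floor_le (Real.sqrt_nonneg _)
      calc ((m i : ℝ))^2 ≤ (Real.sqrt ((T^2 - (i:ℝ)^2)/3))^2 :=
            pow_le_pow_left₀ (Nat.cast_nonneg _) h1 2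
        _ = (T^2 - (i:ℝ)^2)/3 := Real.sq_sqrt hnn
    have hj2 : ((q.2 : ℝ))^2 ≤ ((m i : ℝ))^2 := by
      have l1 : -((m i : ℝ)) ≤ (q.2 : ℝ) := by exact_mod_cast hq2
      have l2 : ((q.2 : ℝ)) ≤ (m i : ℝ) := by exact_mod_cast hq3
      exact sq_le_sq' l1 l2
    have hcond : 0 ≤ q.1 ∧ (q.1 : ℝ)^2 + 3*(q.2:ℝ)^2 ≤ T^2 := by
      constructor
      · rw [hq1]; exact_mod_cast Nat.zero_le i
      · rw [hq1]
        push_cast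
        nlinarith
    rw [hF, Finset.mem_filter]
    refine ⟨?_, hcond⟩
    have hq' : q ∈ F := by rw [← Finset.mem_coe, ← hSF]; exact hcond
    rw [hF, Finset.mem_filter] at hq'
    exact hq'.1
  have hScard : ({q : ℤ × ℤ | 0 ≤ q.1 ∧ (q.1 : ℝ) ^ 2 + 3 * (q.2 : ℝ) ^ 2 ≤ T ^ 2}.ncard) = F.card := by
    rw [hSF, Set.ncard_coe_finset]
  have hGcard : G.card = ∑ i ∈ Finset.range (N+1), (2 * m i + 1) := by
    rw [hG, Finset.card_biUnion]
    · apply Finset.sum_congr rfl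
      intro i _
      rw [Finset.card_product, Finset.card_singleton, one_mul, Int.card_Icc]
      omega
    · intro x hx y hy hxy
      simp only [Function.onFun]
      rw [Finset.disjoint_left]
      intro q hqx hqy
      rw [hmem] at hqx hqy
      have : (x:ℤ) = (y:ℤ) := by rw [← hqx.1, hqy.1]
      exact hxy (by exact_mod_cast this)
  rw [hScard]
  have hterm : ∀ i ∈ Finset.range (N+1),
      (2:ℝ) / Real.sqrt 3 * Real.sqrt (T^2 - (i:ℝ)^2) - 1 ≤ ((2 * m i + 1 : ℕ) : ℝ) := by
    intro i hi
    have hiN : i ≤ N := Nat.lt_succ_iff.mp (Finset.mem_range.mp hi)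
    have hiT : (i:ℝ) ≤ T := le_trans (by exact_mod_cast Nat.cast_le.mpr hiN) hNT
    have hnn : (0:ℝ) ≤ T^2 - (i:ℝ)^2 := by nlinarith [Nat.cast_nonneg (α := ℝ) i]
    have hfloor : Real.sqrt ((T^2 - (i:ℝ)^2)/3) - 1 ≤ ((m i : ℕ) : ℝ) :=
      le_of_lt (Nat.sub_one_lt_floor _)
    have hsq : Real.sqrt ((T^2 - (i:ℝ)^2)/3) = Real.sqrt (T^2-(i:ℝ)^2) / Real.sqrt 3 :=
      Real.sqrt_div hnn 3
    push_cast
    rw [hsq] at hfloor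
    have heq : (2:ℝ)/Real.sqrt 3 * Real.sqrt (T^2-(i:ℝ)^2)
        = 2 * (Real.sqrt (T^2-(i:ℝ)^2)/Real.sqrt 3) := by ring
    rw [heq]
    linarith
  have hsum := Finset.sum_le_sum hterm
  have hsum2 : ∑ i ∈ Finset.range (N+1), ((2:ℝ)/Real.sqrt 3 * Real.sqrt (T^2 - (i:ℝ)^2) - 1)
      = (2/Real.sqrt 3) * (∑ i ∈ Finset.range (N+1), Real.sqrt (T^2 - (i:ℝ)^2)) - ((N:ℝ)+1) := by
    rw [Finset.sum_sub_distrib, ← Finset.mul_sum]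
    simp
  have hint := sum_sqrt_ge T hT
  have h3 : (0:ℝ) < Real.sqrt 3 := Real.sqrt_pos.mpr (by norm_num)
  have e1 : (2/Real.sqrt 3) * (Real.pi*T^2/4) = Real.pi*T^2/(2*Real.sqrt 3) := by
    field_simp
    ring
  have e2 : (2/Real.sqrt 3) * (Real.pi*T^2/4)
      ≤ (2/Real.sqrt 3) * (∑ i ∈ Finset.range (N+1), Real.sqrt (T^2 - (i:ℝ)^2)) :=
    mul_le_mul_of_nonneg_left hint (by positivity)
  have hchain : Real.pi * T^2/(2*Real.sqrt 3) - T - 1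
      ≤ ((∑ i ∈ Finset.range (N+1), (2 * m i + 1) : ℕ) : ℝ) := by
    push_cast
    push_cast at hsum
    linarith [hsum, hsum2, e1, e2, hNT]
  have hfin : ((∑ i ∈ Finset.range (N+1), (2 * m i + 1) : ℕ) : ℝ) ≤ (F.card : ℝ) := by
    rw [← hGcard]
    exact_mod_cast Finset.card_le_card hGF
  linarith
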